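/- For every real number α > 0 and all real numbers a, b, setting g(t) := a·e^{αt} + b·e^{−αt}, one has ∫₁² g(t)² dt ≤ (1/(1 + cosh(2α))) · (∫₀¹ g(t)² dt + ∫₂³ g(t)² dt). -/

import Mathlib

open Real intervalIntegral in
private lemma integ_sq (α : ℝ) (hα : 0 < α) (a b x y : ℝ) :
    (∫ t in x..y, (a * Real.exp (α * t) + b * Real.exp (-(α * t))) ^ 2) =
      a ^ 2 * (Real.exp (2 * α * y) - Real.exp (2 * α * x)) / (2 * α) + 2 * a * b * (y - x)
        + b ^ 2 * (Real.exp (-(2 * α * x)) - Real.exp (-(2 * α * y))) / (2 * α) := by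
  have h2α : (2 * α) ≠ 0 := by positivity
  have key : ∀ t : ℝ, HasDerivAt
      (fun t => a ^ 2 * Real.exp (2 * α * t) / (2 * α) + 2 * a * b * t
        - b ^ 2 * Real.exp (-(2 * α * t)) / (2 * α))
      ((a * Real.exp (α * t) + b * Real.exp (-(α * t))) ^ 2) t := by
    intro t
    have h1 : HasDerivAt (fun t : ℝ => Real.exp (2 * α * t)) (Real.exp (2 * α * t) * (2 * α)) t := by
      simpa [Function.comp_def] using (Real.hasDerivAt_exp (2 * α * t)).comp t
        ((hasDerivAt_id t).const_mul (2 * α))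
    have h2 : HasDerivAt (fun t : ℝ => Real.exp (-(2 * α * t)))
        (Real.exp (-(2 * α * t)) * (-(2 * α))) t := by
      simpa [Function.comp_def, Pi.neg_apply] using (Real.hasDerivAt_exp (-(2 * α * t))).comp t
        (((hasDerivAt_id t).const_mul (2 * α)).neg)
    have h3 := (((h1.const_mul (a ^ 2)).div_const (2 * α)).add
        ((hasDerivAt_id t).const_mul (2 * a * b))).sub
        ((h2.const_mul (b ^ 2)).div_const (2 * α))
    refine h3.congr_deriv (Eq.symm ?_)
    have e1 : Real.exp (α * t) * Real.exp (-(α * t)) = 1 := by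
      rw [← Real.exp_add]; simp
    have e2 : Real.exp (α * t) * Real.exp (α * t) = Real.exp (2 * α * t) := by
      rw [← Real.exp_add]; ring_nf
    have e3 : Real.exp (-(α * t)) * Real.exp (-(α * t)) = Real.exp (-(2 * α * t)) := by
      rw [← Real.exp_add]; ring_nf
    field_simp
    linear_combination (norm := ring_nf) a ^ 2 * e2 + 2 * a * b * e1 + b ^ 2 * e3
  rw [intervalIntegral.integral_eq_sub_of_hasDerivAt (fun t _ => key t)
    (Continuous.intervalIntegrable (by continuity) x y)]
  ring

/-- inequality (5.5): for `α > 0` and `g(t) = a e^{αt} + b e^{-αt}`,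
`∫₁² g² ≤ (1/(1 + cosh 2α)) (∫₀¹ g² + ∫₂³ g²)`. -/
theorem stmt10 (α : ℝ) (hα : 0 < α) (a b : ℝ) :
    (∫ t in (1:ℝ)..2, (a * Real.exp (α * t) + b * Real.exp (-(α * t))) ^ 2) ≤
      1 / (1 + Real.cosh (2 * α)) *
        ((∫ t in (0:ℝ)..1, (a * Real.exp (α * t) + b * Real.exp (-(α * t))) ^ 2) +
          ∫ t in (2:ℝ)..3, (a * Real.exp (α * t) + b * Real.exp (-(α * t))) ^ 2) := by
  set s := Real.exp α with hs_def
  have hs0 : 0 < s := Real.exp_pos α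
  have hs1 : 1 < s := by
    rw [hs_def]
    linarith [Real.add_one_lt_exp (ne_of_gt hα)]
  -- key inequality from sinh α > α
  have hkey : 2 * α * s ≤ s ^ 2 - 1 := by
    have h := Real.self_lt_sinh_iff.mpr hα
    rw [Real.sinh_eq, Real.exp_neg, ← hs_def] at h
    nlinarith [h, hs0, inv_mul_cancel₀ (ne_of_gt hs0)]
  -- powers of s
  have ep : ∀ n : ℕ, Real.exp (α * n) = s ^ n := fun n => by
    rw [mul_comm, Real.exp_nat_mul, hs_def]
  have e0 : Real.exp (2 * α * 0) = 1 := by norm_num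
  have e1 : Real.exp (2 * α * 1) = s ^ 2 := by
    rw [show 2 * α * 1 = α * (2 : ℕ) by push_cast; ring, ep]
  have e2 : Real.exp (2 * α * 2) = s ^ 4 := by
    rw [show 2 * α * 2 = α * (4 : ℕ) by push_cast; ring, ep]
  have e3 : Real.exp (2 * α * 3) = s ^ 6 := by
    rw [show 2 * α * 3 = α * (6 : ℕ) by push_cast; ring, ep]
  have ecosh : Real.cosh (2 * α) = (s ^ 2 + (s ^ 2)⁻¹) / 2 := by
    rw [Real.cosh_eq, Real.exp_neg, show (2 : ℝ) * α = α * (2 : ℕ) by push_cast; ring, ep]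
  have hC : 0 < 1 + Real.cosh (2 * α) := by positivity
  rw [integ_sq α hα, integ_sq α hα, integ_sq α hα, div_mul_eq_mul_div, le_div_iff₀ hC, one_mul]
  rw [Real.exp_neg, Real.exp_neg, Real.exp_neg, Real.exp_neg, e0, e1, e2, e3, ecosh]
  rw [← sub_nonneg]
  have hexpand :
      (a ^ 2 * (s ^ 2 - 1) / (2 * α) + 2 * a * b * (1 - 0)
          + b ^ 2 * (1⁻¹ - (s ^ 2)⁻¹) / (2 * α)
        + (a ^ 2 * (s ^ 6 - s ^ 4) / (2 * α) + 2 * a * b * (3 - 2)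
          + b ^ 2 * ((s ^ 4)⁻¹ - (s ^ 6)⁻¹) / (2 * α)))
      - (a ^ 2 * (s ^ 4 - s ^ 2) / (2 * α) + 2 * a * b * (2 - 1)
          + b ^ 2 * ((s ^ 2)⁻¹ - (s ^ 4)⁻¹) / (2 * α)) * (1 + (s ^ 2 + (s ^ 2)⁻¹) / 2)
      = (s ^ 2 - 1) ^ 2 * (a ^ 2 * s ^ 6 * (s ^ 2 - 1) - 4 * a * b * α * s ^ 4
          + b ^ 2 * (s ^ 2 - 1)) / (4 * α * s ^ 6) := by
    field_simp
    ring
  rw [hexpand]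
  apply div_nonneg _ (by positivity)
  apply mul_nonneg (sq_nonneg _)
  nlinarith [mul_nonneg (sub_nonneg.2 hkey) (sq_nonneg (a * s ^ 3 + b)),
    mul_nonneg (by nlinarith : (0:ℝ) ≤ s ^ 2 - 1 + 2 * α * s) (sq_nonneg (a * s ^ 3 - b))]
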